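/- If r is the Ramsey number R(k, k+1), then every graph G on at least r vertices satisfies λ(G) ≥ k, i.e., some graph in the LC orbit of G has an independent set of size k. Consequently Λ_n ≥ k for all n ≥ r. -/

import Mathlib

variable {V : Type*}

/-- Local complementation at vertex `v`: complement the induced subgraph on the
neighborhood of `v`, leaving all other adjacencies unchanged. -/
def localComp (G : SimpleGraph V) (v : V) : SimpleGraph V where
  Adj x y := (G.Adj v x ∧ G.Adj v y ∧ ¬ G.Adj x y ∧ x ≠ y) ∨ (¬(G.Adj v x ∧ G.Adj v y) ∧ G.Adj x y)
  symm := by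
    constructor
    intro x y h
    rcases h with ⟨h1, h2, h3, h4⟩ | ⟨h1, h2⟩
    · exact Or.inl ⟨h2, h1, fun h => h3 h.symm, h4.symm⟩
    · exact Or.inr ⟨fun h => h1 ⟨h.2, h.1⟩, h2.symm⟩
  loopless := by
    constructor
    intro x h
    rcases h with ⟨_, _, _, h4⟩ | ⟨_, h2⟩
    · exact h4 rfl
    · exact G.irrefl h2

/-- LC-equivalence: `H` is obtained from `G` by a finite sequence of local complementations. -/
def lcEquiv (G H : SimpleGraph V) : Prop :=
  Relation.ReflTransGen (fun G' H' => ∃ v, localComp G' v = H') G H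

/-- `A` is an independent set of `G`: its vertices are pairwise non-adjacent. -/
def isIndep (G : SimpleGraph V) (A : Finset V) : Prop :=
  ∀ a ∈ A, ∀ b ∈ A, ¬ G.Adj a b

/-- `lam G`: the maximum size of an independent set over all graphs in the LC orbit of `G`. -/
noncomputable def lam {n : ℕ} (G : SimpleGraph (Fin n)) : ℕ :=
  sSup { k | ∃ H, lcEquiv G H ∧ ∃ A : Finset (Fin n), isIndep H A ∧ A.card = k }

/-- `Lam n`: the minimum of `lam` over all graphs on `n` vertices. -/
noncomputable def Lam (n : ℕ) : ℕ :=
  sInf { m | ∃ G : SimpleGraph (Fin n), lam G = m }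


lemma main_exists (k r n : ℕ)
    (hr : ∀ H : SimpleGraph (Fin r),
      (∃ A : Finset (Fin r), isIndep H A ∧ k ≤ A.card) ∨
      (∃ B : Finset (Fin r), H.IsClique ↑B ∧ k + 1 ≤ B.card))
    (hrn : r ≤ n) (G : SimpleGraph (Fin n)) :
    ∃ H, lcEquiv G H ∧ ∃ A : Finset (Fin n), isIndep H A ∧ k ≤ A.card := by
  set f : Fin r ↪ Fin n := ⟨Fin.castLE hrn, Fin.castLE_injective hrn⟩ with hf
  rcases hr (G.comap f) with ⟨A, hA, hk⟩ | ⟨B, hB, hk⟩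
  · refine ⟨G, Relation.ReflTransGen.refl, A.map f, ?_, by simpa using hk⟩
    intro a ha b hb
    simp only [Finset.mem_map] at ha hb
    obtain ⟨x, hx, rfl⟩ := ha
    obtain ⟨y, hy, rfl⟩ := hb
    exact hA x hx y hy
  · have hBne : B.Nonempty := Finset.card_pos.mp (by omega)
    obtain ⟨v, hv⟩ := hBne
    refine ⟨localComp G (f v), Relation.ReflTransGen.single ⟨f v, rfl⟩,
      (B.erase v).map f, ?_, ?_⟩
    · intro a ha b hb
      simp only [Finset.mem_map] at ha hb
      obtain ⟨x, hx, rfl⟩ := ha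
      obtain ⟨y, hy, rfl⟩ := hb
      have hxB := Finset.mem_of_mem_erase hx
      have hyB := Finset.mem_of_mem_erase hy
      have hvx : G.Adj (f v) (f x) := hB hv hxB (fun h => (Finset.ne_of_mem_erase hx) (by exact_mod_cast h.symm))
      have hvy : G.Adj (f v) (f y) := hB hv hyB (fun h => (Finset.ne_of_mem_erase hy) (by exact_mod_cast h.symm))
      intro h
      rcases h with ⟨_, _, h3, h4⟩ | ⟨h1, h2⟩
      · have hxy : x ≠ y := fun h => h4 (by rw [h])
        exact h3 (hB hxB hyB (by exact_mod_cast hxy))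
      · rcases eq_or_ne x y with rfl | hxy
        · exact G.irrefl h2
        · exact h1 ⟨hvx, hvy⟩
    · rw [Finset.card_map, Finset.card_erase_of_mem hv]; omega

lemma lam_ge (k r n : ℕ)
    (hr : ∀ H : SimpleGraph (Fin r),
      (∃ A : Finset (Fin r), isIndep H A ∧ k ≤ A.card) ∨
      (∃ B : Finset (Fin r), H.IsClique ↑B ∧ k + 1 ≤ B.card))
    (hrn : r ≤ n) (G : SimpleGraph (Fin n)) : k ≤ lam G := by
  obtain ⟨H, hGH, A, hA, hk⟩ := main_exists k r n hr hrn G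
  obtain ⟨A', hsub, hcard⟩ := Finset.exists_subset_card_eq hk
  have hmem : k ∈ { m | ∃ H, lcEquiv G H ∧ ∃ A : Finset (Fin n), isIndep H A ∧ A.card = m } :=
    ⟨H, hGH, A', fun a ha b hb => hA a (hsub ha) b (hsub hb), hcard⟩
  refine le_csSup ⟨n, ?_⟩ hmem
  rintro m ⟨H, _, A, _, rfl⟩
  simpa using Finset.card_le_univ A

/-- If `r` is the Ramsey number `R(k, k+1)` (every graph on `r` vertices has an
independent set of size `k` or a clique of size `k+1`), then every graph `G` on
`n ≥ r` vertices has a graph in its LC orbit with an independent set of size `k`;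
hence `λ(G) ≥ k` and `Λ_n ≥ k`. -/
theorem lam_ge_of_ramsey (k r n : ℕ)
    (hr : ∀ H : SimpleGraph (Fin r),
      (∃ A : Finset (Fin r), isIndep H A ∧ k ≤ A.card) ∨
      (∃ B : Finset (Fin r), H.IsClique ↑B ∧ k + 1 ≤ B.card))
    (hrn : r ≤ n) (G : SimpleGraph (Fin n)) :
    (∃ H, lcEquiv G H ∧ ∃ A : Finset (Fin n), isIndep H A ∧ k ≤ A.card) ∧
      k ≤ lam G ∧ k ≤ Lam n := by
  refine ⟨main_exists k r n hr hrn G, lam_ge k r n hr hrn G, ?_⟩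
  refine le_csInf ⟨lam G, G, rfl⟩ ?_
  rintro m ⟨G', rfl⟩
  exact lam_ge k r n hr hrn G'
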